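/- Let p ≥ 0, let T ≥ 1 be an integer, and let X_1, …, X_T be i.i.d. random variables with the geometric distribution on {0,1,2,…} with success probability 1/(1+p), i.e., Pr[X = k] = (p/(1+p))^k · (1/(1+p)) for each integer k ≥ 0. Then Pr[ Σ_{t=1}^{T} (X_t + 1) ≥ 5·(1+p)·T ] ≤ exp(−2T). -/

import Mathlib

open MeasureTheory ProbabilityTheory Real

lemma geom_mgf_aux {Ω : Type*} [MeasurableSpace Ω] (μ : Measure Ω)
    [IsProbabilityMeasure μ] (p : ℝ) (hp : 0 ≤ p) (Z : Ω → ℕ) (hZ : Measurable Z)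
    (hd : ∀ k, μ {ω | Z ω = k} = ENNReal.ofReal ((p / (1 + p)) ^ k * (1 / (1 + p)))) :
    Integrable (fun ω => Real.exp (3 / (5 * (1 + p)) * ((Z ω : ℝ) + 1))) μ ∧
    mgf (fun ω => (Z ω : ℝ) + 1) μ (3 / (5 * (1 + p))) ≤ 5 / 2 := by
  have hp1 : (0:ℝ) < 1 + p := by linarith
  set t0 : ℝ := 3 / (5 * (1 + p)) with ht0def
  set r : ℝ := p / (1 + p) with hrdef
  set q : ℝ := 1 / (1 + p) with hqdef
  have hq0 : 0 < q := by positivity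
  have hr0 : 0 ≤ r := by positivity
  have ht0pos : 0 < t0 := by positivity
  have hrt : r + t0 < 1 := by
    rw [hrdef, ht0def]; rw [div_add_div _ _ (by positivity) (by positivity), div_lt_one (by positivity)]
    ring_nf; nlinarith
  have hE1 : Real.exp t0 * (1 - t0) ≤ 1 := by
    have h := Real.add_one_le_exp (-t0)
    have : Real.exp t0 * (1 - t0) ≤ Real.exp t0 * Real.exp (-t0) := by
      apply mul_le_mul_of_nonneg_left (by linarith) (Real.exp_pos t0).le
    rwa [← Real.exp_add, add_neg_cancel, Real.exp_zero] at this
  have hre : r * Real.exp t0 < 1 := by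
    nlinarith [Real.exp_pos t0, hE1]
  have hre0 : 0 ≤ r * Real.exp t0 := by positivity
  -- the geometric series
  set g : ℕ → ℝ := fun n => Real.exp (t0 * ((n : ℝ) + 1)) * ((p / (1 + p)) ^ n * (1 / (1 + p))) with hgdef
  have hgeq : ∀ n, g n = (Real.exp t0 * q) * (r * Real.exp t0) ^ n := by
    intro n
    rw [hgdef]
    simp only [mul_pow, ← Real.exp_nat_mul]
    rw [show t0 * ((n:ℝ) + 1) = (n:ℝ) * t0 + t0 by ring, Real.exp_add]
    ring
  have hgsum : Summable g := by
    rw [funext hgeq]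
    exact (summable_geometric_of_lt_one hre0 hre).mul_left _
  have hgtsum : ∑' n, g n = Real.exp t0 * q * (1 - r * Real.exp t0)⁻¹ := by
    rw [funext hgeq, tsum_mul_left, tsum_geometric_of_lt_one hre0 hre]
  have hgnn : ∀ n, 0 ≤ g n := by intro n; rw [hgeq]; positivity
  -- lintegral computation
  have hmap : ∀ k : ℕ, (μ.map Z) {k} = ENNReal.ofReal ((p / (1 + p)) ^ k * (1 / (1 + p))) := by
    intro k
    rw [Measure.map_apply hZ (measurableSet_singleton k)]
    exact hd k
  have hL : ∫⁻ ω, ENNReal.ofReal (Real.exp (t0 * ((Z ω : ℝ) + 1))) ∂μ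
      = ENNReal.ofReal (∑' n, g n) := by
    have h1 : ∫⁻ ω, ENNReal.ofReal (Real.exp (t0 * ((Z ω : ℝ) + 1))) ∂μ
        = ∫⁻ n, ENNReal.ofReal (Real.exp (t0 * ((n : ℝ) + 1))) ∂(μ.map Z) := by
      rw [lintegral_map (measurable_from_nat) hZ]
    rw [h1, lintegral_countable' _]
    simp only [hmap]
    rw [ENNReal.ofReal_tsum_of_nonneg hgnn hgsum]
    exact tsum_congr fun n => by
      rw [hgdef, ← ENNReal.ofReal_mul (Real.exp_nonneg _)]
  -- integrability
  have hnn : ∀ ω, 0 ≤ Real.exp (t0 * ((Z ω : ℝ) + 1)) := fun ω => Real.exp_nonneg _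
  have hsm : Measurable (fun ω => Real.exp (t0 * ((Z ω : ℝ) + 1))) :=
    (((measurable_from_nat.comp hZ).add measurable_const).const_mul t0).exp
  have hint : Integrable (fun ω => Real.exp (t0 * ((Z ω : ℝ) + 1))) μ := by
    refine ⟨hsm.aestronglyMeasurable, ?_⟩
    rw [hasFiniteIntegral_iff_ofReal (Filter.Eventually.of_forall hnn), hL]
    exact ENNReal.ofReal_lt_top
  refine ⟨by simpa [mul_comm] using hint, ?_⟩
  have hmgf : mgf (fun ω => (Z ω : ℝ) + 1) μ t0
      = Real.exp t0 * q * (1 - r * Real.exp t0)⁻¹ := by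
    rw [mgf]
    rw [integral_eq_lintegral_of_nonneg_ae (Filter.Eventually.of_forall hnn)
      hsm.aestronglyMeasurable, hL, ENNReal.toReal_ofReal (tsum_nonneg hgnn), hgtsum]
  rw [hmgf]
  have hA : 0 < 1 - r * Real.exp t0 := by linarith
  rw [← div_eq_mul_inv, div_le_iff₀ hA]
  have hq' : q * (1 + p) = 1 := by rw [hqdef]; field_simp
  have hr' : r * (1 + p) = p := by rw [hrdef]; field_simp
  have ht0' : t0 * (1 + p) = 3 / 5 := by rw [ht0def]; field_simp
  nlinarith [hE1, Real.exp_pos t0, mul_le_mul_of_nonneg_right hE1 hp1.le,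
    mul_pos (Real.exp_pos t0) hp1]

/-- Multiplicative concentration for i.i.d. geometric random variables
(failure-count model, success probability `1/(1+p)`):
`Pr[ Σ_{t=1}^T (X_t + 1) ≥ 5(1+p)T ] ≤ exp(−2T)`. -/
theorem stmt17 {Ω : Type*} [MeasurableSpace Ω] (μ : Measure Ω)
    [IsProbabilityMeasure μ] (T : ℕ) (hT : 1 ≤ T) (p : ℝ) (hp : 0 ≤ p)
    (X : Fin T → Ω → ℕ) (hmeas : ∀ t, Measurable (X t))
    (hindep : iIndepFun X μ)
    (hdist : ∀ t k, μ {ω | X t ω = k} =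
      ENNReal.ofReal ((p / (1 + p)) ^ k * (1 / (1 + p)))) :
    μ {ω | 5 * (1 + p) * (T : ℝ) ≤ ∑ t, ((X t ω : ℝ) + 1)} ≤
      ENNReal.ofReal (Real.exp (-2 * (T : ℝ))) := by
  have hp1 : (0:ℝ) < 1 + p := by linarith
  set t0 : ℝ := 3 / (5 * (1 + p)) with ht0def
  have ht0pos : 0 < t0 := by positivity
  set Y : Fin T → Ω → ℝ := fun t ω => (X t ω : ℝ) + 1 with hYdef
  have hYmeas : ∀ t, Measurable (Y t) := fun t =>
    (measurable_from_nat.comp (hmeas t)).add measurable_const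
  have hYindep : iIndepFun Y μ :=
    hindep.comp (fun _ (n : ℕ) => (n : ℝ) + 1) (fun _ => measurable_from_nat)
  have haux := fun t => geom_mgf_aux μ p hp (X t) (hmeas t) (hdist t)
  have hint : ∀ i ∈ Finset.univ, Integrable (fun ω => Real.exp (t0 * Y i ω)) μ :=
    fun i _ => (haux i).1
  have hintS : Integrable (fun ω => Real.exp (t0 * (∑ i, Y i) ω)) μ :=
    hYindep.integrable_exp_mul_sum hYmeas hint
  have hch := measure_ge_le_exp_mul_mgf (μ := μ) (X := ∑ i, Y i) (t := t0)
    (5 * (1 + p) * (T : ℝ)) ht0pos.le hintS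
  rw [hYindep.mgf_sum hYmeas] at hch
  have hprod : ∏ i, mgf (Y i) μ t0 ≤ (5/2 : ℝ) ^ T := by
    calc ∏ i, mgf (Y i) μ t0 ≤ ∏ _i : Fin T, (5/2 : ℝ) :=
          Finset.prod_le_prod (fun i _ => mgf_nonneg) (fun i _ => (haux i).2)
      _ = (5/2 : ℝ) ^ T := by simp [div_pow]
  have hset : {ω | 5 * (1 + p) * (T : ℝ) ≤ ∑ t, ((X t ω : ℝ) + 1)}
      = {ω | 5 * (1 + p) * (T : ℝ) ≤ (∑ i, Y i) ω} := by
    ext ω; simp [hYdef, Finset.sum_apply]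
  have ht3 : t0 * (5 * (1 + p) * (T : ℝ)) = 3 * T := by
    rw [ht0def]; field_simp
  have h2 : Real.exp (-t0 * (5 * (1 + p) * (T : ℝ))) * (5/2 : ℝ) ^ T
      ≤ Real.exp (-2 * (T : ℝ)) := by
    rw [neg_mul, ht3]
    have h52 : (5/2 : ℝ) ^ T ≤ Real.exp 1 ^ T := by
      apply pow_le_pow_left₀ (by norm_num)
      linarith [Real.exp_one_gt_d9]
    calc Real.exp (-(3 * T)) * (5/2 : ℝ) ^ T
        ≤ Real.exp (-(3 * T)) * Real.exp 1 ^ T :=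
          mul_le_mul_of_nonneg_left h52 (Real.exp_nonneg _)
      _ = Real.exp (-2 * T) := by
          rw [← Real.exp_nat_mul, ← Real.exp_add]; ring_nf
  have h1 : (μ {ω | 5 * (1 + p) * (T : ℝ) ≤ (∑ i, Y i) ω}).toReal
      ≤ Real.exp (-2 * (T : ℝ)) := by
    refine hch.trans (le_trans ?_ h2)
    exact mul_le_mul_of_nonneg_left hprod (Real.exp_nonneg _)
  rw [hset]
  calc μ {ω | 5 * (1 + p) * (T : ℝ) ≤ (∑ i, Y i) ω}
      = ENNReal.ofReal (μ {ω | 5 * (1 + p) * (T : ℝ) ≤ (∑ i, Y i) ω}).toReal :=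
        (ENNReal.ofReal_toReal (measure_ne_top μ _)).symm
    _ ≤ ENNReal.ofReal (Real.exp (-2 * (T : ℝ))) := ENNReal.ofReal_le_ofReal h1
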